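/- Let ρ : ℝ → ℝ be nonnegative and locally integrable with F(s) := ∫₀ˢ ρ(u) du unbounded above, let D(x) := inf{ y ∈ ℝ | F(y) > x } for x ≥ 0 and s* := D(0). Then for every x ≥ 0, the total cost of buying x stocks satisfies ∫_{s*}^{D(x)} u·ρ(u) du = ∫₀ˣ D(y) dy. -/

import Mathlib

open MeasureTheory Set

/-- The total cost of buying `x` stocks by market order equals both the integral of
price times density over the cleared part of the book, and the integral of the
post-trade ask price. -/
theorem stmt_0 (ρ : ℝ → ℝ) (hρ_nonneg : ∀ u, 0 ≤ ρ u)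
    (hρ_loc : LocallyIntegrable ρ volume)
    (F D : ℝ → ℝ)
    (hF : ∀ s, F s = ∫ u in (0:ℝ)..s, ρ u)
    (hF_unbdd : ∀ M : ℝ, ∃ s, F s > M)
    (hD : ∀ x, 0 ≤ x → D x = sInf {y : ℝ | F y > x})
    (sstar : ℝ) (hs : sstar = D 0) :
    ∀ x, 0 ≤ x → (∫ u in sstar..D x, u * ρ u) = ∫ y in (0:ℝ)..x, D y := by
  intro x hx
  -- interval integrability of ρ
  have hρint : ∀ a b : ℝ, IntervalIntegrable ρ volume a b := by
    intro a b
    constructor <;>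
      exact (hρ_loc.integrableOn_isCompact isCompact_Icc).mono_set Ioc_subset_Icc_self
  have hFc : Continuous F := by
    rw [show F = fun s => ∫ u in (0:ℝ)..s, ρ u from funext hF]
    exact intervalIntegral.continuous_primitive hρint 0
  have hFsub : ∀ a b : ℝ, F b - F a = ∫ u in a..b, ρ u := by
    intro a b
    rw [hF, hF, ← intervalIntegral.integral_add_adjacent_intervals (hρint 0 a) (hρint a b)]
    ring
  have hFmono : Monotone F := by
    intro a b hab
    have h := hFsub a b
    have h2 : 0 ≤ ∫ u in a..b, ρ u :=
      intervalIntegral.integral_nonneg hab fun u _ => hρ_nonneg u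
    linarith
  have hF0 : F 0 = 0 := by simp [hF]
  have hSne : ∀ z : ℝ, {y : ℝ | F y > z}.Nonempty := fun z => hF_unbdd z
  have hSbdd : ∀ z : ℝ, 0 ≤ z → BddBelow {y : ℝ | F y > z} := by
    intro z hz
    refine ⟨0, fun y hy => ?_⟩
    by_contra hy0
    push_neg at hy0
    have h1 : F y ≤ F 0 := hFmono hy0.le
    rw [hF0] at h1
    have : F y > z := hy
    linarith
  have hFD : ∀ z : ℝ, 0 ≤ z → F (D z) = z := by
    intro z hz
    rw [hD z hz]
    have hne := hSne z
    have hbdd := hSbdd z hz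
    rcases lt_trichotomy (F (sInf {y : ℝ | F y > z})) z with h | h | h
    · exfalso
      have hopen : IsOpen {s : ℝ | F s < z} := isOpen_lt hFc continuous_const
      obtain ⟨ε, hε, hball⟩ := Metric.isOpen_iff.1 hopen _ h
      have hmem : sInf {y : ℝ | F y > z} + ε / 2 ∈ Metric.ball (sInf {y : ℝ | F y > z}) ε := by
        rw [Metric.mem_ball, Real.dist_eq]
        rw [show sInf {y : ℝ | F y > z} + ε / 2 - sInf {y : ℝ | F y > z} = ε / 2 by ring,
          abs_of_pos (by linarith)]
        linarith
      have hlb : sInf {y : ℝ | F y > z} + ε / 2 ≤ sInf {y : ℝ | F y > z} := by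
        apply le_csInf hne
        intro s hsS
        by_contra hlt
        push_neg at hlt
        have hFs : F s ≤ F (sInf {y : ℝ | F y > z} + ε / 2) := hFmono hlt.le
        have h2 : F (sInf {y : ℝ | F y > z} + ε / 2) < z := hball hmem
        have : F s > z := hsS
        linarith
      linarith
    · exact h
    · exfalso
      have hopen : IsOpen {s : ℝ | z < F s} := isOpen_lt continuous_const hFc
      obtain ⟨ε, hε, hball⟩ := Metric.isOpen_iff.1 hopen _ h
      have hmem : sInf {y : ℝ | F y > z} - ε / 2 ∈ Metric.ball (sInf {y : ℝ | F y > z}) ε := by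
        rw [Metric.mem_ball, Real.dist_eq]
        rw [show sInf {y : ℝ | F y > z} - ε / 2 - sInf {y : ℝ | F y > z} = -(ε / 2) by ring,
          abs_neg, abs_of_pos (by linarith)]
        linarith
      have h2 : sInf {y : ℝ | F y > z} ≤ sInf {y : ℝ | F y > z} - ε / 2 :=
        csInf_le hbdd (hball hmem)
      linarith
  have hDmono : ∀ z w : ℝ, 0 ≤ z → z ≤ w → D z ≤ D w := by
    intro z w hz hzw
    rw [hD z hz, hD w (hz.trans hzw)]
    exact csInf_le_csInf (hSbdd z hz) (hSne w) fun y hy => lt_of_le_of_lt hzw hy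
  have hFle_of_lt : ∀ t y : ℝ, 0 ≤ y → t < D y → F t ≤ y := by
    intro t y hy ht
    obtain ⟨s, hts, hsD⟩ := exists_between ht
    have hsS : F s ≤ y := by
      by_contra hc
      push_neg at hc
      have h2 := csInf_le (hSbdd y hy) (show s ∈ {y' : ℝ | F y' > y} from hc)
      rw [← hD y hy] at h2
      linarith
    exact (hFmono hts.le).trans hsS
  have hlt_of_Flt : ∀ t y : ℝ, 0 ≤ y → F t < y → t < D y := by
    intro t y hy hFt
    have hle : t ≤ D y := by
      rw [hD y hy]
      apply le_csInf (hSne y)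
      intro s hsS
      by_contra hc
      push_neg at hc
      have h2 : F s ≤ F t := hFmono hc.le
      have : F s > y := hsS
      linarith
    rcases eq_or_lt_of_le hle with heq | h
    · exfalso
      have h2 := hFD y hy
      rw [← heq] at h2
      linarith
    · exact h
  set T := D x with hT
  have hFT : F T = x := hFD x hx
  have hFs : F sstar = 0 := by rw [hs]; exact hFD 0 le_rfl
  have hsT : sstar ≤ T := by rw [hs]; exact hDmono 0 x le_rfl hx
  set A : Set ℝ := Ioc sstar T with hA
  set B : Set ℝ := Ioc (0 : ℝ) x with hB
  have hAmeas : MeasurableSet A := measurableSet_Ioc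
  have hBmeas : MeasurableSet B := measurableSet_Ioc
  have hFtA : ∀ t ∈ A, 0 ≤ F t ∧ F t ≤ x := fun t ht =>
    ⟨hFs ▸ hFmono ht.1.le, hFT ▸ hFmono ht.2⟩
  -- clamped version of D
  set D' : ℝ → ℝ := fun y => D (min (max y 0) x) with hD'def
  have hclamp : ∀ y : ℝ, 0 ≤ min (max y 0) x ∧ min (max y 0) x ≤ x := fun y =>
    ⟨le_min (le_max_right y 0) hx, min_le_right _ _⟩
  have hD'mono : Monotone D' := fun a b hab =>
    hDmono _ _ (hclamp a).1 (min_le_min (max_le_max hab le_rfl) le_rfl)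
  have hD'eq : ∀ y ∈ B, D' y = D y := by
    intro y hy
    simp only [hD'def]
    rw [max_eq_left hy.1.le, min_eq_left hy.2]
  have hD'mem : ∀ y : ℝ, sstar ≤ D' y ∧ D' y ≤ T := fun y =>
    ⟨hs ▸ hDmono 0 _ le_rfl (hclamp y).1, hDmono _ x (hclamp y).1 (hclamp y).2⟩
  haveI hAfin : IsFiniteMeasure (volume.restrict A) := ⟨by
    rw [Measure.restrict_apply_univ, hA, Real.volume_Ioc]; exact ENNReal.ofReal_lt_top⟩
  haveI hBfin : IsFiniteMeasure (volume.restrict B) := ⟨by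
    rw [Measure.restrict_apply_univ, hB, Real.volume_Ioc]; exact ENNReal.ofReal_lt_top⟩
  have hρA : IntegrableOn ρ A volume :=
    (hρ_loc.integrableOn_isCompact isCompact_Icc).mono_set Ioc_subset_Icc_self
  -- Claim A : LHS = sstar * x + ∫ t in A, (x - F t)
  have h2int : IntegrableOn (fun u => (u - sstar) * ρ u) A volume := by
    apply Integrable.mono' (hρA.const_mul (T - sstar))
    · exact (continuous_id.sub continuous_const).aestronglyMeasurable.mul
        hρA.aestronglyMeasurable
    · filter_upwards [ae_restrict_mem hAmeas] with u hu
      rw [norm_mul, Real.norm_eq_abs, Real.norm_eq_abs,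
        abs_of_nonneg (by linarith [hu.1] : (0:ℝ) ≤ u - sstar), abs_of_nonneg (hρ_nonneg u)]
      exact mul_le_mul_of_nonneg_right (by linarith [hu.2]) (hρ_nonneg u)
  have hintA : ∫ u in A, ρ u = x := by
    rw [hA, ← intervalIntegral.integral_of_le hsT, ← hFsub sstar T, hFT, hFs]
    ring
  have hrep : ∀ u ∈ A, (u - sstar) * ρ u = ∫ t in A, (if t < u then ρ u else 0) := by
    intro u hu
    have hfun : (fun t => if t < u then ρ u else 0) = (Iio u).indicator fun _ => ρ u := by
      funext t; simp [Set.indicator_apply]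
    have hset : A ∩ Iio u = Ioo sstar u := by
      ext t
      simp only [hA, mem_inter_iff, mem_Ioc, mem_Iio, mem_Ioo]
      constructor
      · rintro ⟨⟨h1, _⟩, h3⟩; exact ⟨h1, h3⟩
      · rintro ⟨h1, h3⟩; exact ⟨⟨h1, h3.le.trans hu.2⟩, h3⟩
    rw [hfun, setIntegral_indicator measurableSet_Iio, hset, setIntegral_const,
      Real.volume_real_Ioo_of_le (by linarith [hu.1]), smul_eq_mul]
  have hFubA : (∫ u in A, ∫ t in A, (if t < u then ρ u else 0))
      = ∫ t in A, ∫ u in A, (if t < u then ρ u else 0) := by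
    apply integral_integral_swap
    have hmeas : AEStronglyMeasurable (fun p : ℝ × ℝ => if p.2 < p.1 then ρ p.1 else 0)
        ((volume.restrict A).prod (volume.restrict A)) := by
      have h1 : AEStronglyMeasurable (fun p : ℝ × ℝ => ρ p.1)
          ((volume.restrict A).prod (volume.restrict A)) :=
        hρA.aestronglyMeasurable.comp_fst
      have hset : MeasurableSet {p : ℝ × ℝ | p.2 < p.1} :=
        measurableSet_lt measurable_snd measurable_fst
      refine (h1.indicator hset).congr ?_
      filter_upwards with p
      by_cases h : p.2 < p.1 <;> simp [Set.indicator_apply, h]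
    apply Integrable.mono' (g := fun p : ℝ × ℝ => ρ p.1) ?_ hmeas
    · filter_upwards with p
      by_cases h : p.2 < p.1 <;>
        simp [h, Real.norm_eq_abs, abs_of_nonneg (hρ_nonneg _), hρ_nonneg]
    · refine (integrable_prod_iff hρA.aestronglyMeasurable.comp_fst).2 ⟨?_, ?_⟩
      · filter_upwards with u; exact integrable_const _
      · simp only [integral_const, smul_eq_mul]
        exact hρA.norm.const_mul _
  have hinner : ∀ t ∈ A, (∫ u in A, (if t < u then ρ u else 0)) = x - F t := by
    intro t ht
    have hfun : (fun u => if t < u then ρ u else 0) = (Ioi t).indicator ρ := by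
      funext u; simp [Set.indicator_apply, mem_Ioi]
    have hset : A ∩ Ioi t = Ioc t T := by
      ext u
      simp only [hA, mem_inter_iff, mem_Ioc, mem_Ioi]
      constructor
      · rintro ⟨⟨_, h2⟩, h3⟩; exact ⟨h3, h2⟩
      · rintro ⟨h1, h2⟩; exact ⟨⟨ht.1.trans h1, h2⟩, h1⟩
    rw [hfun, setIntegral_indicator measurableSet_Ioi, hset,
      ← intervalIntegral.integral_of_le ht.2, ← hFsub t T, hFT]
  have claimA : (∫ u in A, u * ρ u) = sstar * x + ∫ t in A, (x - F t) := by
    have hsplit : (∫ u in A, u * ρ u)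
        = (∫ u in A, sstar * ρ u) + ∫ u in A, (u - sstar) * ρ u := by
      rw [← integral_add (hρA.const_mul sstar) h2int]
      apply setIntegral_congr_fun hAmeas
      intro u _; ring
    have h1 : (∫ u in A, sstar * ρ u) = sstar * x := by
      rw [integral_const_mul, hintA]
    have h2 : (∫ u in A, (u - sstar) * ρ u) = ∫ t in A, (x - F t) := by
      rw [setIntegral_congr_fun hAmeas hrep, hFubA]
      exact setIntegral_congr_fun hAmeas hinner
    rw [hsplit, h1, h2]
  -- Claim B : RHS = sstar * x + ∫ t in A, (x - F t)
  have hD'int : IntegrableOn D' B volume := by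
    apply Integrable.mono' (integrable_const (max |sstar| |T|))
      hD'mono.measurable.aestronglyMeasurable
    filter_upwards with y
    rw [Real.norm_eq_abs]
    have h1 := (hD'mem y).1
    have h2 := (hD'mem y).2
    rw [abs_le]
    constructor
    · have := neg_abs_le sstar
      have := le_max_left |sstar| |T|
      linarith
    · have := le_abs_self T
      have := le_max_right |sstar| |T|
      linarith
  have hrepB : ∀ y ∈ B, D' y - sstar = ∫ t in A, (if t < D' y then (1:ℝ) else 0) := by
    intro y _
    have hfun : (fun t => if t < D' y then (1:ℝ) else 0)
        = (Iio (D' y)).indicator fun _ => (1:ℝ) := by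
      funext t; simp [Set.indicator_apply]
    have hset : A ∩ Iio (D' y) = Ioo sstar (D' y) := by
      ext t
      simp only [hA, mem_inter_iff, mem_Ioc, mem_Iio, mem_Ioo]
      constructor
      · rintro ⟨⟨h1, _⟩, h3⟩; exact ⟨h1, h3⟩
      · rintro ⟨h1, h3⟩; exact ⟨⟨h1, h3.le.trans (hD'mem y).2⟩, h3⟩
    rw [hfun, setIntegral_indicator measurableSet_Iio, hset, setIntegral_const,
      Real.volume_real_Ioo_of_le (by linarith [(hD'mem y).1]), smul_eq_mul,
      mul_one]
  have hFubB : (∫ y in B, ∫ t in A, (if t < D' y then (1:ℝ) else 0))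
      = ∫ t in A, ∫ y in B, (if t < D' y then (1:ℝ) else 0) := by
    apply integral_integral_swap
    have hset : MeasurableSet {p : ℝ × ℝ | p.2 < D' p.1} :=
      measurableSet_lt measurable_snd (hD'mono.measurable.comp measurable_fst)
    have hmeas : AEStronglyMeasurable (fun p : ℝ × ℝ => if p.2 < D' p.1 then (1:ℝ) else 0)
        ((volume.restrict B).prod (volume.restrict A)) := by
      refine ((aestronglyMeasurable_const (b := (1:ℝ))).indicator hset).congr ?_
      filter_upwards with p
      by_cases h : p.2 < D' p.1 <;> simp [Set.indicator_apply, h]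
    apply Integrable.mono' (g := fun _ : ℝ × ℝ => (1:ℝ)) (integrable_const _) hmeas
    filter_upwards with p
    by_cases h : p.2 < D' p.1 <;> simp [h]
  have hinnerB : ∀ t ∈ A, (∫ y in B, (if t < D' y then (1:ℝ) else 0)) = x - F t := by
    intro t ht
    obtain ⟨hFt0, hFtx⟩ := hFtA t ht
    have hae : (fun y => if t < D' y then (1:ℝ) else 0)
        =ᵐ[volume.restrict B] (Ioc (F t) x).indicator fun _ => (1:ℝ) := by
      have hne : ∀ᵐ y ∂volume.restrict B, y ≠ F t := by
        apply ae_restrict_of_ae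
        rw [ae_iff]
        have : {y : ℝ | ¬y ≠ F t} = {F t} := by ext y; simp
        rw [this]
        exact measure_singleton _
      filter_upwards [hne, ae_restrict_mem hBmeas] with y hyne hyB
      by_cases hcase : t < D' y
      · have h1 : F t ≤ y := hFle_of_lt t y hyB.1.le (by rwa [hD'eq y hyB] at hcase)
        have h2 : F t < y := lt_of_le_of_ne h1 (Ne.symm hyne)
        simp [Set.indicator_apply, hcase, mem_Ioc, h2, hyB.2]
      · have h1 : ¬F t < y := fun hc =>
          hcase (by rw [hD'eq y hyB]; exact hlt_of_Flt t y hyB.1.le hc)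
        simp [Set.indicator_apply, hcase, mem_Ioc, h1]
    have hsub : B ∩ Ioc (F t) x = Ioc (F t) x :=
      inter_eq_right.2 (Ioc_subset_Ioc_left hFt0)
    rw [integral_congr_ae hae, setIntegral_indicator measurableSet_Ioc, hsub,
      setIntegral_const, Real.volume_real_Ioc_of_le (by linarith), smul_eq_mul,
      mul_one]
  have claimB : (∫ y in B, D y) = sstar * x + ∫ t in A, (x - F t) := by
    have h0 : (∫ y in B, D y) = ∫ y in B, D' y :=
      (setIntegral_congr_fun hBmeas fun y hy => hD'eq y hy).symm
    have hvolB : volume.real B = x := by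
      rw [hB, Real.volume_real_Ioc_of_le (by linarith), sub_zero]
    have hsplit : (∫ y in B, D' y) = sstar * x + ∫ y in B, (D' y - sstar) := by
      have hsub : (∫ y in B, (D' y - sstar))
          = (∫ y in B, D' y) - ∫ _ in B, (sstar : ℝ) :=
        integral_sub hD'int (integrable_const _)
      rw [setIntegral_const, hvolB, smul_eq_mul] at hsub
      linarith
    have h2 : (∫ y in B, (D' y - sstar)) = ∫ t in A, (x - F t) := by
      rw [setIntegral_congr_fun hBmeas hrepB, hFubB]
      exact setIntegral_congr_fun hAmeas hinnerB
    rw [h0, hsplit, h2]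
  rw [intervalIntegral.integral_of_le hsT, intervalIntegral.integral_of_le hx]
  rw [← hA, ← hB] at *
  rw [claimA, claimB]
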